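/- Let G be a finite set of flat and linear ground Π^C-clauses, Σ_s and Σ_1 the extension function symbols occurring in G, C_s ⊆ C a set of constants occurring in G, and T := T0 ∪ K_s ∪ K_1 ∪ K_i a theory extension satisfying all hypotheses of the symbol-elimination theorem (T0 allows quantifier elimination; the extension is local; K_s, K_1, K_i are flat, linear, with every variable below an extension symbol, over the disjoint extension signatures Σ_s, Σ_1, Σ_i respectively). Let Γ be the T-general uniform interpolant of G w.r.t. Σ_s ∪ C̄_s (with C_s ⊆ C̄_s) obtained by Algorithm 1. If ψ is a ground Π_s^{C_s}-formula which is a (T0 ∪ K_s ∪ UIF_{Σ_1 ∪ Σ_i})-uniform interpolant of Γ w.r.t. C_s, then ψ is a T-general uniform interpolant of G w.r.t. Σ_s ∪ C_s. -/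

import Mathlib

/- Common framework: first-order signatures with designated sets of interpreted symbols,
uninterpreted (extension) function symbols and fresh constants, clauses, flatness/linearity,
instances, locality of theory extensions, (general) uniform interpolants, and a semantic
specification of the symbol-elimination Algorithm 1 of the paper. -/

open FirstOrder FirstOrder.Language

namespace PaperSE

variable {L : FirstOrder.Language.{0, 0}}

/-- A function symbol of `L` together with its arity. Constants are the arity-0 symbols. -/
abbrev Sym (L : FirstOrder.Language.{0, 0}) : Type := Σ n : ℕ, L.Functions n

/-- Ground terms (no variables; constants are `0`-ary function symbols of `L`). -/
abbrev GTerm (L : FirstOrder.Language.{0, 0}) : Type := L.Term Empty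

/-- A ground term viewed as a term with variables from `α`. -/
def GTerm.cast {α : Type} (t : GTerm L) : L.Term α := Term.relabel Empty.elim t

/-- The term `c()` for a constant symbol `c`. -/
def constT (c : L.Functions 0) : GTerm L := Term.func c (fun j => j.elim0)

/- ### Structures, with the interpretation passed explicitly -/

def FunM (M : Type) (S : L.Structure M) {n : ℕ} (f : L.Functions n) (x : Fin n → M) : M := by
  letI := S; exact Structure.funMap f x

def RelM (M : Type) (S : L.Structure M) {n : ℕ} (r : L.Relations n) (x : Fin n → M) : Prop := by
  letI := S; exact Structure.RelMap r x

def TVal (M : Type) (S : L.Structure M) {α : Type} (v : α → M) (t : L.Term α) : M := by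
  letI := S; exact t.realize v

/-- Value of a ground term. -/
def GVal (M : Type) (S : L.Structure M) (t : GTerm L) : M :=
  TVal M S (fun e : Empty => e.elim) t

def RealizeF (M : Type) (S : L.Structure M) {α : Type} (φ : L.Formula α) (v : α → M) : Prop := by
  letI := S; exact φ.Realize v

def RealizeSent (M : Type) (S : L.Structure M) (φ : L.Sentence) : Prop :=
  RealizeF M S φ (fun e : Empty => e.elim)

def ModelsT (M : Type) (S : L.Structure M) (T : L.Theory) : Prop :=
  ∀ φ ∈ T, RealizeSent M S φ

/- ### Symbols and ground terms occurring in terms and formulas -/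

/-- The set of subterms of a term. -/
def subterms {α : Type} : L.Term α → Set (L.Term α)
  | .var a => {Term.var a}
  | .func f ts => insert (Term.func f ts) (⋃ i, subterms (ts i))

/-- The function (and constant) symbols occurring in a term. -/
def termSyms {α : Type} : L.Term α → Set (Sym L)
  | .var _ => ∅
  | .func f ts => insert ⟨_, f⟩ (⋃ i, termSyms (ts i))

/-- The list of occurrences of variables in a term. -/
def varOccs {α : Type} : L.Term α → List α
  | .var a => [a]
  | .func _ ts => (List.finRange _).flatMap (fun i => varOccs (ts i))

/-- The list of occurrences of constant symbols in a ground term. -/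
def constOccs : GTerm L → List (L.Functions 0)
  | .var e => e.elim
  | .func (l := n) f ts =>
      if h : n = 0 then [h ▸ f]
      else (List.finRange n).flatMap (fun i => constOccs (ts i))

/-- Does the term start with a function symbol from `F`? -/
def rootIn (F : Set (Sym L)) {α : Type} : L.Term α → Prop
  | .var _ => False
  | .func f _ => (⟨_, f⟩ : Sym L) ∈ F

/-- The function (and constant) symbols occurring in a bounded formula. -/
def bfSyms {α : Type} : ∀ {n : ℕ}, L.BoundedFormula α n → Set (Sym L)
  | _, .falsum => ∅
  | _, .equal t u => termSyms t ∪ termSyms u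
  | _, .rel _ ts => ⋃ i, termSyms (ts i)
  | _, .imp f g => bfSyms f ∪ bfSyms g
  | _, .all f => bfSyms f

abbrev sentSyms (s : L.Sentence) : Set (Sym L) := bfSyms s

def theorySyms (T : L.Theory) : Set (Sym L) := ⋃ s ∈ T, sentSyms s

/-- The ground terms occurring in a bounded formula. -/
def bfGTerms {α : Type} : ∀ {n : ℕ}, L.BoundedFormula α n → Set (GTerm L)
  | _, .falsum => ∅
  | _, .equal t u => {g | GTerm.cast g ∈ subterms t ∨ GTerm.cast g ∈ subterms u}
  | _, .rel _ ts => {g | ∃ i, GTerm.cast g ∈ subterms (ts i)}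
  | _, .imp f g => bfGTerms f ∪ bfGTerms g
  | _, .all f => bfGTerms f

abbrev sentGTerms (s : L.Sentence) : Set (GTerm L) := bfGTerms s

/- ### Literals and clauses -/

/-- Literals over variables `α`. -/
inductive Lit (L : FirstOrder.Language.{0, 0}) (α : Type) : Type where
  | eq (t u : L.Term α)
  | neq (t u : L.Term α)
  | rel {n : ℕ} (R : L.Relations n) (ts : Fin n → L.Term α)
  | nrel {n : ℕ} (R : L.Relations n) (ts : Fin n → L.Term α)

namespace Lit

def terms {α : Type} : Lit L α → Set (L.Term α)
  | eq t u => {t, u}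
  | neq t u => {t, u}
  | rel _ ts => Set.range ts
  | nrel _ ts => Set.range ts

/-- An atom (positive literal). -/
def Positive {α : Type} : Lit L α → Prop
  | eq _ _ => True
  | rel _ _ => True
  | _ => False

def subst {α β : Type} (σ : α → L.Term β) : Lit L α → Lit L β
  | eq t u => eq (t.subst σ) (u.subst σ)
  | neq t u => neq (t.subst σ) (u.subst σ)
  | rel R ts => rel R (fun i => (ts i).subst σ)
  | nrel R ts => nrel R (fun i => (ts i).subst σ)

def Realize (M : Type) (S : L.Structure M) {α : Type} (v : α → M) : Lit L α → Prop
  | eq t u => TVal M S v t = TVal M S v u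
  | neq t u => TVal M S v t ≠ TVal M S v u
  | rel R ts => RelM M S R (fun i => TVal M S v (ts i))
  | nrel R ts => ¬ RelM M S R (fun i => TVal M S v (ts i))

def syms {α : Type} (l : Lit L α) : Set (Sym L) := ⋃ t ∈ l.terms, termSyms t

end Lit

/-- A (universally closed) clause: a disjunction of literals with variables `Fin nvars`,
viewed as universally quantified. -/
structure Clause (L : FirstOrder.Language.{0, 0}) : Type where
  nvars : ℕ
  lits : List (Lit L (Fin nvars))

/-- A ground clause: a disjunction of ground literals. -/
abbrev GClause (L : FirstOrder.Language.{0, 0}) : Type := List (Lit L Empty)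

def Clause.instantiate (C : Clause L) (σ : Fin C.nvars → GTerm L) : GClause L :=
  C.lits.map (Lit.subst σ)

def Clause.syms (C : Clause L) : Set (Sym L) := ⋃ l ∈ C.lits, Lit.syms l

def GClause.syms (C : GClause L) : Set (Sym L) := ⋃ l ∈ C, Lit.syms l

def GClause.gterms (C : GClause L) : Set (GTerm L) := ⋃ l ∈ C, ⋃ t ∈ Lit.terms l, subterms t

def ClausesSyms (K : Set (Clause L)) : Set (Sym L) := ⋃ C ∈ K, C.syms

def GSyms (G : Set (GClause L)) : Set (Sym L) := ⋃ C ∈ G, GClause.syms C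

def GTerms (G : Set (GClause L)) : Set (GTerm L) := ⋃ C ∈ G, GClause.gterms C

/- ### Satisfaction -/

def ClauseHolds (M : Type) (S : L.Structure M) (C : Clause L) : Prop :=
  ∀ v : Fin C.nvars → M, ∃ l ∈ C.lits, Lit.Realize M S v l

def GClauseHolds (M : Type) (S : L.Structure M) (C : GClause L) : Prop :=
  ∃ l ∈ C, Lit.Realize M S (fun e : Empty => e.elim) l

def ModelsK (M : Type) (S : L.Structure M) (K : Set (Clause L)) : Prop :=
  ∀ C ∈ K, ClauseHolds M S C

def ModelsG (M : Type) (S : L.Structure M) (G : Set (GClause L)) : Prop :=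
  ∀ C ∈ G, GClauseHolds M S C

/-- Satisfiability (in the joint signature) of base theory `T0`, clause set `K`
and ground clauses `G`. -/
def SatTKG (T0 : L.Theory) (K : Set (Clause L)) (G : Set (GClause L)) : Prop :=
  ∃ (M : Type) (_ : Nonempty M) (S : L.Structure M),
    ModelsT M S T0 ∧ ModelsK M S K ∧ ModelsG M S G

/-- `G ⊨_{T0 ∪ K} θ` for a sentence `θ`. -/
def EntailsC (T0 : L.Theory) (K : Set (Clause L)) (G : Set (GClause L)) (θ : L.Sentence) : Prop :=
  ∀ (M : Type) (S : L.Structure M), Nonempty M →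
    ModelsT M S T0 → ModelsK M S K → ModelsG M S G → RealizeSent M S θ

/-- `A ⊨_{T0 ∪ K} θ` for sentences `A`, `θ`. -/
def EntailsS (T0 : L.Theory) (K : Set (Clause L)) (A θ : L.Sentence) : Prop :=
  ∀ (M : Type) (S : L.Structure M), Nonempty M →
    ModelsT M S T0 → ModelsK M S K → RealizeSent M S A → RealizeSent M S θ

/- ### Extension ground terms and instances -/

/-- `est(K, G)`: the ground terms starting with a function symbol in `F`
occurring in `K` or in `G`. -/
def estKG (F : Set (Sym L)) (K : Set (Clause L)) (G : Set (GClause L)) : Set (GTerm L) :=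
  { t | rootIn F t ∧
      ((∃ C ∈ K, ∃ l ∈ C.lits, ∃ s ∈ Lit.terms l, GTerm.cast t ∈ subterms s) ∨
       (∃ C ∈ G, t ∈ GClause.gterms C)) }

/-- `K[Tt]`: the set of ground instances of clauses of `K` all of whose terms starting
with a function symbol in `F` belong to `Tt`. -/
def instancesIn (F : Set (Sym L)) (K : Set (Clause L)) (Tt : Set (GTerm L)) :
    Set (GClause L) :=
  { D | ∃ C ∈ K, ∃ σ : Fin C.nvars → GTerm L, D = C.instantiate σ ∧
      ∀ t ∈ GClause.gterms (C.instantiate σ), rootIn F t → t ∈ Tt }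

/- ### Locality -/

/-- Locality of the extension of the theory `T0` together with base clauses `K0`
by the clauses `K`, with extension symbols `F`. -/
def LocalExt2 (F : Set (Sym L)) (T0 : L.Theory) (K0 K : Set (Clause L)) : Prop :=
  ∀ G : Set (GClause L), G.Finite →
    ((¬ ∃ (M : Type) (_ : Nonempty M) (S : L.Structure M),
        ModelsT M S T0 ∧ ModelsK M S K0 ∧ ModelsK M S K ∧ ModelsG M S G) ↔
     (¬ ∃ (M : Type) (_ : Nonempty M) (S : L.Structure M),
        ModelsT M S T0 ∧ ModelsK M S K0 ∧
          ModelsG M S (instancesIn F K (estKG F K G) ∪ G)))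

/-- Locality of the theory extension `T0 ⊆ T0 ∪ K` with extension symbols `F`. -/
abbrev LocalExt (F : Set (Sym L)) (T0 : L.Theory) (K : Set (Clause L)) : Prop :=
  LocalExt2 F T0 ∅ K

/-- `Ψ`-locality of the theory extension `T0 ⊆ T0 ∪ K` with extension symbols `F`. -/
def PsiLocalExt (F : Set (Sym L)) (T0 : L.Theory) (K : Set (Clause L))
    (Ψ : Set (GTerm L) → Set (GTerm L)) : Prop :=
  ∀ G : Set (GClause L), G.Finite →
    (¬ SatTKG T0 K G ↔ ¬ SatTKG T0 ∅ (instancesIn F K (Ψ (estKG F K G)) ∪ G))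

/- ### Flatness and linearity -/

/-- All symbols occurring directly below a function symbol from `F` are variables. -/
def flatTerm (F : Set (Sym L)) {α : Type} : L.Term α → Prop
  | .var _ => True
  | .func f ts =>
      ((⟨_, f⟩ : Sym L) ∈ F → ∀ i, ∃ a, ts i = Term.var a) ∧ ∀ i, flatTerm F (ts i)

/-- All symbols occurring directly below a function symbol from `F` are constants. -/
def flatGTerm (F : Set (Sym L)) : GTerm L → Prop
  | .var e => e.elim
  | .func f ts =>
      ((⟨_, f⟩ : Sym L) ∈ F → ∀ i, ∃ c : L.Functions 0, ts i = constT c) ∧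
        ∀ i, flatGTerm F (ts i)

def Clause.extTerms (F : Set (Sym L)) (C : Clause L) : Set (L.Term (Fin C.nvars)) :=
  { t | rootIn F t ∧ ∃ l ∈ C.lits, ∃ s ∈ Lit.terms l, t ∈ subterms s }

def Clause.Flat (F : Set (Sym L)) (C : Clause L) : Prop :=
  ∀ l ∈ C.lits, ∀ t ∈ Lit.terms l, flatTerm F t

def Clause.Linear (F : Set (Sym L)) (C : Clause L) : Prop :=
  (∀ t ∈ C.extTerms F, ∀ u ∈ C.extTerms F,
      (∃ x, x ∈ varOccs t ∧ x ∈ varOccs u) → t = u) ∧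
  (∀ t ∈ C.extTerms F, (varOccs t).Nodup)

/-- Every variable occurring in the clause occurs below a function symbol from `F`. -/
def Clause.VarsBelowExt (F : Set (Sym L)) (C : Clause L) : Prop :=
  ∀ x : Fin C.nvars, (∃ l ∈ C.lits, ∃ s ∈ Lit.terms l, x ∈ varOccs s) →
    ∃ t ∈ C.extTerms F, x ∈ varOccs t

def GClause.extTerms (F : Set (Sym L)) (C : GClause L) : Set (GTerm L) :=
  { t | rootIn F t ∧ t ∈ GClause.gterms C }

def GClause.Flat (F : Set (Sym L)) (C : GClause L) : Prop :=
  ∀ l ∈ C, ∀ t ∈ Lit.terms l, flatGTerm F t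

def GClause.Linear (F : Set (Sym L)) (C : GClause L) : Prop :=
  (∀ t ∈ GClause.extTerms F C, ∀ u ∈ GClause.extTerms F C,
      (∃ c, c ∈ constOccs t ∧ c ∈ constOccs u) → t = u) ∧
  (∀ t ∈ GClause.extTerms F C, (constOccs t).Nodup)

/- ### Agreement of structures and (reduct-)embeddings -/

/-- The two interpretations agree on all relation symbols and on the function symbols in `F`. -/
def AgreeOn (M : Type) (S1 S2 : L.Structure M) (F : Set (Sym L)) : Prop :=
  (∀ (n : ℕ) (f : L.Functions n), (⟨n, f⟩ : Sym L) ∈ F →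
      ∀ x : Fin n → M, FunM M S1 f x = FunM M S2 f x) ∧
  (∀ (n : ℕ) (r : L.Relations n) (x : Fin n → M), RelM M S1 r x ↔ RelM M S2 r x)

/-- An embedding of the reducts to the subsignature consisting of all predicate symbols and
the function symbols in `F`: an injective map preserving and reflecting all predicates and
preserving the functions in `F`. -/
structure SubEmb (L : FirstOrder.Language.{0, 0}) (F : Set (Sym L)) (M N : Type)
    (SM : L.Structure M) (SN : L.Structure N) : Type where
  toFun : M → N
  inj : Function.Injective toFun
  map_fun : ∀ (n : ℕ) (f : L.Functions n), (⟨n, f⟩ : Sym L) ∈ F →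
      ∀ x : Fin n → M, toFun (FunM M SM f x) = FunM N SN f (toFun ∘ x)
  map_rel : ∀ (n : ℕ) (r : L.Relations n) (x : Fin n → M),
      RelM M SM r x ↔ RelM N SN r (toFun ∘ x)

/- ### Quantifier elimination and related properties of the base theory -/

/-- `T0` allows quantifier elimination (for formulas over the symbols in `F0`). -/
def HasQE (T0 : L.Theory) (F0 : Set (Sym L)) : Prop :=
  ∀ (m : ℕ) (φ : L.Formula (Fin m)), bfSyms φ ⊆ F0 →
    ∃ ψ : L.Formula (Fin m), ψ.IsQF ∧ bfSyms ψ ⊆ F0 ∧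
      ∀ (M : Type) (S : L.Structure M), Nonempty M → ModelsT M S T0 →
        ∀ v : Fin m → M, (RealizeF M S φ v ↔ RealizeF M S ψ v)

def ModelsLits (M : Type) (S : L.Structure M) (A : List (Lit L Empty)) : Prop :=
  ∀ l ∈ A, Lit.Realize M S (fun e : Empty => e.elim) l

def litListSyms (A : List (Lit L Empty)) : Set (Sym L) := ⋃ l ∈ A, Lit.syms l

/-- Convexity of a theory (with clause axioms `K`). -/
def Convex (T0 : L.Theory) (K : Set (Clause L)) : Prop :=
  ∀ Γ : List (Lit L Empty), (∀ l ∈ Γ, l.Positive) →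
  ∀ (m : ℕ) (s t : Fin (m + 1) → GTerm L),
    (∀ (M : Type) (S : L.Structure M), Nonempty M → ModelsT M S T0 → ModelsK M S K →
        ModelsLits M S Γ → ∃ i, GVal M S (s i) = GVal M S (t i)) →
    ∃ i0, ∀ (M : Type) (S : L.Structure M), Nonempty M → ModelsT M S T0 → ModelsK M S K →
        ModelsLits M S Γ → GVal M S (s i0) = GVal M S (t i0)

/-- Stable infiniteness. -/
def StablyInfinite (T0 : L.Theory) (K : Set (Clause L)) : Prop :=
  ∀ φ : L.Sentence, φ.IsQF →
    (∃ (M : Type) (_ : Nonempty M) (S : L.Structure M),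
        ModelsT M S T0 ∧ ModelsK M S K ∧ RealizeSent M S φ) →
    ∃ (M : Type) (_ : Infinite M) (S : L.Structure M),
        ModelsT M S T0 ∧ ModelsK M S K ∧ RealizeSent M S φ

/-- Equality interpolation (for a convex theory with interpreted symbols `F0`). -/
def EqInterpolating (T0 : L.Theory) (F0 : Set (Sym L)) : Prop :=
  ∀ (A B : List (Lit L Empty)) (a b : L.Functions 0),
    (⟨0, a⟩ : Sym L) ∉ litListSyms B → (⟨0, b⟩ : Sym L) ∉ litListSyms A →
    (∀ (M : Type) (S : L.Structure M), Nonempty M → ModelsT M S T0 → ModelsLits M S A →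
        ModelsLits M S B → GVal M S (constT a) = GVal M S (constT b)) →
    ∃ t : GTerm L, termSyms t ⊆ F0 ∪ (litListSyms A ∩ litListSyms B) ∧
      ∀ (M : Type) (S : L.Structure M), Nonempty M → ModelsT M S T0 → ModelsLits M S A →
        ModelsLits M S B →
          GVal M S (constT a) = GVal M S t ∧ GVal M S t = GVal M S (constT b)

/-- A universal sentence. -/
def IsUniversalSent (s : L.Sentence) : Prop :=
  ∃ (m : ℕ) (ψ : L.BoundedFormula Empty m), ψ.IsQF ∧ s = ψ.alls

def IsUniversalTheory (T : L.Theory) : Prop := ∀ s ∈ T, IsUniversalSent s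

/-- Close the outermost `k` bound variables existentially. -/
def exsTo {m : ℕ} : ∀ {k : ℕ}, L.BoundedFormula Empty (m + k) → L.BoundedFormula Empty m
  | 0, φ => φ
  | _ + 1, φ => exsTo φ.ex

/-- A `∀∃`-sentence. -/
def IsAESent (s : L.Sentence) : Prop :=
  ∃ (m k : ℕ) (ψ : L.BoundedFormula Empty (m + k)), ψ.IsQF ∧ s = (exsTo ψ).alls

def IsAETheory (T : L.Theory) : Prop := ∀ s ∈ T, IsAESent s

/- ### General uniform interpolants and uniform interpolants (covers) -/

/-- `ψ` is a general uniform interpolant of the ground clause set `G` w.r.t. the theory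
`T0 ∪ K` and the symbols in `Keep` (which contains all interpreted symbols, the shared
uninterpreted symbols and the shared constants). -/
def IsGUIg (T0 : L.Theory) (K : Set (Clause L)) (G : Set (GClause L))
    (Keep : Set (Sym L)) (ψ : L.Sentence) : Prop :=
  ψ.IsQF ∧ sentSyms ψ ⊆ Keep ∧ EntailsC T0 K G ψ ∧
  ∀ θ : L.Sentence, θ.IsQF → sentSyms θ ∩ GSyms G ⊆ Keep →
    EntailsC T0 K G θ → EntailsS T0 K ψ θ

/-- `ψ` is a general uniform interpolant of the ground formula `φ` w.r.t. the theory
`T0 ∪ K` and the symbols in `Keep`. -/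
def IsGUIs (T0 : L.Theory) (K : Set (Clause L)) (φ : L.Sentence)
    (Keep : Set (Sym L)) (ψ : L.Sentence) : Prop :=
  ψ.IsQF ∧ sentSyms ψ ⊆ Keep ∧ EntailsS T0 K φ ψ ∧
  ∀ θ : L.Sentence, θ.IsQF → sentSyms θ ∩ sentSyms φ ⊆ Keep →
    EntailsS T0 K φ θ → EntailsS T0 K ψ θ

/-- `ψ` is a uniform interpolant (cover) of `Γ` w.r.t. the theory `T0 ∪ K`, the set `CC`
of (eliminable) constants and the kept constants `Cs ⊆ CC`; all other symbols are treated
as interpreted. -/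
def IsUI (T0 : L.Theory) (K : Set (Clause L)) (CC Cs : Set (Sym L)) (Γ ψ : L.Sentence) : Prop :=
  ψ.IsQF ∧ sentSyms ψ ∩ CC ⊆ Cs ∧ EntailsS T0 K Γ ψ ∧
  ∀ θ : L.Sentence, θ.IsQF → sentSyms θ ∩ sentSyms Γ ∩ CC ⊆ Cs →
    EntailsS T0 K Γ θ → EntailsS T0 K ψ θ

/- ### The semantic specification of Algorithm 1 -/

/-- The constants occurring in some term of `S` as an argument of a function symbol in `Sigs`. -/
def argConstsOf (Sigs : Set (Sym L)) (S : Set (GTerm L)) : Set (Sym L) :=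
  { p | ∃ c : L.Functions 0, p = ⟨0, c⟩ ∧
      ∃ t ∈ S, ∃ (n : ℕ) (f : L.Functions n) (ts : Fin n → GTerm L),
        t = Term.func f ts ∧ (⟨n, f⟩ : Sym L) ∈ Sigs ∧ ∃ i, ts i = constT c }

/-- Semantic specification of the output `Γ` of Algorithm 1, applied to the theory extension
`T0 ∪ K` (extension symbols `F`), the ground clauses `G` and the instantiation terms `Tt`,
keeping exactly the symbols in `Keep` (all interpreted symbols, the parameters `Sigs` and the
non-eliminated constants):  `Γ` is a ground formula over `Keep` which, on each model of `T0`,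
expresses the existence of values for the eliminated constants and for the purified names of
the extension terms (equivalently, of a reinterpretation of the eliminated symbols) satisfying
`K[Tt] ∪ G`. -/
def AlgOneOutput (F : Set (Sym L)) (T0 : L.Theory) (K : Set (Clause L)) (G : Set (GClause L))
    (Tt : Set (GTerm L)) (Keep : Set (Sym L)) (Γ : L.Sentence) : Prop :=
  Γ.IsQF ∧ sentSyms Γ ⊆ Keep ∧
  ∀ (M : Type) (S : L.Structure M), Nonempty M → ModelsT M S T0 →
    (RealizeSent M S Γ ↔
      ∃ S' : L.Structure M, AgreeOn M S S' Keep ∧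
        ModelsG M S' (instancesIn F K Tt) ∧ ModelsG M S' G)

/- ### Implicit definability -/

/-- `f` is implicitly definable w.r.t. `T0 ∪ K` over the symbols in `Pi1`:
any two interpretations (on the same universe) which agree on `Pi1` and are both models
of `T0 ∪ K` interpret `f` in the same way.  (This is the standard semantic rendering of
the definition via renaming the symbols outside `Pi1` to primed copies.) -/
def ImplicitlyDefinable (T0 : L.Theory) (K : Set (Clause L)) (Pi1 : Set (Sym L))
    {n : ℕ} (f : L.Functions n) : Prop :=
  ∀ (M : Type), Nonempty M → ∀ S1 S2 : L.Structure M,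
    AgreeOn M S1 S2 Pi1 →
    ModelsT M S1 T0 → ModelsK M S1 K → ModelsT M S2 T0 → ModelsK M S2 K →
    ∀ x : Fin n → M, FunM M S1 f x = FunM M S2 f x

end PaperSE

namespace PaperSE

section Aux

variable {L : FirstOrder.Language.{0, 0}}

/- ### Unfolding lemmas for the tactic-defined semantics -/

lemma TVal_eq (M : Type) (S : L.Structure M) {α : Type} (v : α → M) (t : L.Term α) :
    TVal M S v t = @FirstOrder.Language.Term.realize L M S α v t := rfl

lemma RelM_eq (M : Type) (S : L.Structure M) {n : ℕ} (r : L.Relations n) (x : Fin n → M) :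
    RelM M S r x = @FirstOrder.Language.Structure.RelMap L M S n r x := rfl

lemma RealizeF_eq (M : Type) (S : L.Structure M) {α : Type} (φ : L.Formula α) (v : α → M) :
    RealizeF M S φ v = @FirstOrder.Language.Formula.Realize L M S α φ v := rfl

/- ### Basic term lemmas -/

lemma mem_subterms_self {α : Type} (t : L.Term α) : t ∈ subterms t := by
  cases t <;> simp [subterms]

lemma subterms_finite {α : Type} (t : L.Term α) : (subterms t).Finite := by
  induction t with
  | var a => simp [subterms]
  | func f ts ih =>
      rw [subterms]
      exact (Set.finite_iUnion ih).insert _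

lemma termSyms_mono {α : Type} {t u : L.Term α} (h : u ∈ subterms t) :
    termSyms u ⊆ termSyms t := by
  induction t with
  | var a =>
      rw [subterms] at h; simp only [Set.mem_singleton_iff] at h; subst h; exact subset_rfl
  | func f ts ih =>
      rw [subterms] at h
      rcases h with h | h
      · subst h; exact subset_rfl
      · simp only [Set.mem_iUnion] at h
        obtain ⟨i, hi⟩ := h
        refine (ih i hi).trans ?_
        rw [termSyms]
        exact (Set.subset_iUnion (fun j => termSyms (ts j)) i).trans (Set.subset_insert _ _)

lemma root_mem_termSyms {α : Type} {n : ℕ} (f : L.Functions n) (ts : Fin n → L.Term α) :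
    (⟨n, f⟩ : Sym L) ∈ termSyms (Term.func f ts) := by
  rw [termSyms]; exact Set.mem_insert _ _

lemma termSyms_relabel {α β : Type} (g : α → β) (t : L.Term α) :
    termSyms (Term.relabel g t) = termSyms t := by
  induction t with
  | var a => simp [Term.relabel, termSyms]
  | func f ts ih => simp only [Term.relabel, termSyms, ih]

lemma mem_varOccs_func {α : Type} {n : ℕ} {f : L.Functions n} {ts : Fin n → L.Term α} {x : α} :
    x ∈ varOccs (Term.func f ts) ↔ ∃ i, x ∈ varOccs (ts i) := by
  rw [varOccs]
  simp [List.mem_flatMap, List.mem_finRange]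

lemma subst_congr {α β : Type} {σ σ' : α → L.Term β} {t : L.Term α}
    (h : ∀ x ∈ varOccs t, σ x = σ' x) : t.subst σ = t.subst σ' := by
  induction t with
  | var a => simpa [Term.subst, varOccs] using h a (by simp [varOccs])
  | func f ts ih =>
      simp only [Term.subst]
      congr 1
      funext i
      exact ih i (fun x hx => h x (mem_varOccs_func.2 ⟨i, hx⟩))

lemma subterms_subst {α β : Type} {σ : α → L.Term β} {s u : L.Term α}
    (h : u ∈ subterms s) : u.subst σ ∈ subterms (s.subst σ) := by
  induction s with
  | var a =>
      rw [subterms] at h; simp only [Set.mem_singleton_iff] at h; subst h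
      exact mem_subterms_self _
  | func f ts ih =>
      rw [subterms] at h
      rcases h with h | h
      · subst h; exact mem_subterms_self _
      · simp only [Set.mem_iUnion] at h
        obtain ⟨i, hi⟩ := h
        have := ih i hi
        simp only [Term.subst, subterms]
        right
        exact Set.mem_iUnion.2 ⟨i, this⟩

lemma termSyms_subst {α β : Type} (σ : α → L.Term β) (t : L.Term α) :
    termSyms (t.subst σ) ⊆ termSyms t ∪ ⋃ x ∈ varOccs t, termSyms (σ x) := by
  induction t with
  | var a => simp [Term.subst, varOccs, termSyms]
  | func f ts ih =>
      simp only [Term.subst]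
      rw [termSyms, termSyms]
      intro p hp
      rcases hp with hp | hp
      · exact Or.inl (Set.mem_insert_iff.2 (Or.inl hp))
      · simp only [Set.mem_iUnion] at hp
        obtain ⟨i, hi⟩ := hp
        rcases ih i hi with h | h
        · exact Or.inl (Set.mem_insert_iff.2 (Or.inr (Set.mem_iUnion.2 ⟨i, h⟩)))
        · simp only [Set.mem_iUnion₂] at h ⊢
          obtain ⟨x, hx1, hx2⟩ := h
          exact Or.inr (Set.mem_iUnion₂.2 ⟨x, mem_varOccs_func.2 ⟨i, hx1⟩, hx2⟩)

lemma flatTerm_of_subterm {F : Set (Sym L)} {α : Type} {s u : L.Term α}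
    (hf : flatTerm F s) (h : u ∈ subterms s) : flatTerm F u := by
  induction s with
  | var a =>
      rw [subterms] at h; simp only [Set.mem_singleton_iff] at h; subst h; exact hf
  | func f ts ih =>
      rw [subterms] at h
      rcases h with h | h
      · subst h; exact hf
      · simp only [Set.mem_iUnion] at h
        obtain ⟨i, hi⟩ := h
        exact ih i (hf.2 i) hi

lemma relabel_injective {α β : Type} {g : α → β} (hg : Function.Injective g) :
    Function.Injective (Term.relabel (L := L) g) := by
  intro t
  induction t with
  | var a =>
      intro u hu
      cases u with
      | var b =>
          simp only [Term.relabel, Term.var.injEq] at hu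
          rw [hg hu]
      | func f ts => simp [Term.relabel] at hu
  | func f ts ih =>
      intro u hu
      cases u with
      | var b => simp [Term.relabel] at hu
      | func f' ts' =>
          simp only [Term.relabel, Term.func.injEq] at hu
          obtain ⟨rfl, hf, hts⟩ := hu
          rw [heq_iff_eq] at hf hts
          subst hf
          rw [Term.func.injEq]
          refine ⟨rfl, HEq.refl _, heq_of_eq ?_⟩
          funext i
          exact ih i (congrFun hts i)

end Aux

section Aux2

variable {L : FirstOrder.Language.{0, 0}}

lemma Lit.terms_subst {α β : Type} {σ : α → L.Term β} {l : Lit L α} {s : L.Term α}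
    (h : s ∈ l.terms) : s.subst σ ∈ (l.subst σ).terms := by
  cases l with
  | eq t u =>
      simp only [Lit.terms, Set.mem_insert_iff, Set.mem_singleton_iff] at h
      rcases h with rfl | rfl <;> simp [Lit.subst, Lit.terms]
  | neq t u =>
      simp only [Lit.terms, Set.mem_insert_iff, Set.mem_singleton_iff] at h
      rcases h with rfl | rfl <;> simp [Lit.subst, Lit.terms]
  | rel R ts =>
      obtain ⟨i, rfl⟩ := h
      exact ⟨i, rfl⟩
  | nrel R ts =>
      obtain ⟨i, rfl⟩ := h
      exact ⟨i, rfl⟩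

lemma Lit.terms_subst_surj {α β : Type} {σ : α → L.Term β} {l : Lit L α} {s' : L.Term β}
    (h : s' ∈ (l.subst σ).terms) : ∃ s ∈ l.terms, s' = s.subst σ := by
  cases l with
  | eq t u =>
      simp only [Lit.subst, Lit.terms, Set.mem_insert_iff, Set.mem_singleton_iff] at h
      rcases h with rfl | rfl
      · exact ⟨t, by simp [Lit.terms], rfl⟩
      · exact ⟨u, by simp [Lit.terms], rfl⟩
  | neq t u =>
      simp only [Lit.subst, Lit.terms, Set.mem_insert_iff, Set.mem_singleton_iff] at h
      rcases h with rfl | rfl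
      · exact ⟨t, by simp [Lit.terms], rfl⟩
      · exact ⟨u, by simp [Lit.terms], rfl⟩
  | rel R ts =>
      obtain ⟨i, rfl⟩ := h
      exact ⟨ts i, ⟨i, rfl⟩, rfl⟩
  | nrel R ts =>
      obtain ⟨i, rfl⟩ := h
      exact ⟨ts i, ⟨i, rfl⟩, rfl⟩

lemma litSubst_congr {α β : Type} {σ σ' : α → L.Term β} {l : Lit L α}
    (h : ∀ s ∈ l.terms, ∀ x ∈ varOccs s, σ x = σ' x) : l.subst σ = l.subst σ' := by
  cases l with
  | eq t u =>
      have h1 := subst_congr (h t (by simp [Lit.terms]))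
      have h2 := subst_congr (h u (by simp [Lit.terms]))
      simp only [Lit.subst, h1, h2]
  | neq t u =>
      have h1 := subst_congr (h t (by simp [Lit.terms]))
      have h2 := subst_congr (h u (by simp [Lit.terms]))
      simp only [Lit.subst, h1, h2]
  | rel R ts =>
      have h1 : (fun i => (ts i).subst σ) = fun i => (ts i).subst σ' :=
        funext fun i => subst_congr (h (ts i) ⟨i, rfl⟩)
      simp only [Lit.subst, h1]
  | nrel R ts =>
      have h1 : (fun i => (ts i).subst σ) = fun i => (ts i).subst σ' :=
        funext fun i => subst_congr (h (ts i) ⟨i, rfl⟩)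
      simp only [Lit.subst, h1]

lemma Lit.realize_subst {α : Type} (M : Type) (S : L.Structure M) (σ : α → GTerm L)
    (l : Lit L α) :
    Lit.Realize M S (fun e : Empty => e.elim) (l.subst σ) ↔
      Lit.Realize M S (fun x => GVal M S (σ x)) l := by
  have hterm : ∀ t : L.Term α,
      TVal M S (fun e : Empty => e.elim) (t.subst σ) =
        TVal M S (fun x => GVal M S (σ x)) t := by
    intro t
    simp only [TVal_eq, Term.realize_subst]
    rfl
  cases l <;> simp only [Lit.subst, Lit.Realize, hterm]

lemma holds_instance (M : Type) (S : L.Structure M) {C : Clause L}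
    (hC : ClauseHolds M S C) (σ : Fin C.nvars → GTerm L) :
    GClauseHolds M S (C.instantiate σ) := by
  obtain ⟨l, hl, hr⟩ := hC (fun i => GVal M S (σ i))
  exact ⟨Lit.subst σ l, List.mem_map_of_mem hl, (Lit.realize_subst M S σ l).2 hr⟩

lemma models_instancesIn {M : Type} {S : L.Structure M} {F : Set (Sym L)}
    {K : Set (Clause L)} {Tt : Set (GTerm L)} (h : ModelsK M S K) :
    ModelsG M S (instancesIn F K Tt) := by
  rintro D ⟨C, hC, σ, rfl, -⟩
  exact holds_instance M S (h C hC) σ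

lemma gterm_syms {C : GClause L} {t : GTerm L} (h : t ∈ GClause.gterms C) :
    termSyms t ⊆ GClause.syms C := by
  simp only [GClause.gterms, Set.mem_iUnion₂] at h
  obtain ⟨l, hl, s, hs, hts⟩ := h
  refine (termSyms_mono hts).trans ?_
  intro p hp
  exact Set.mem_iUnion₂.2 ⟨l, hl, Set.mem_iUnion₂.2 ⟨s, hs, hp⟩⟩

lemma lit_syms_mem {C : GClause L} {l : Lit L Empty} (hl : l ∈ C) {s : L.Term Empty}
    (hs : s ∈ l.terms) {p : Sym L} (hp : p ∈ termSyms s) : p ∈ GClause.syms C :=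
  Set.mem_iUnion₂.2 ⟨l, hl, Set.mem_iUnion₂.2 ⟨s, hs, hp⟩⟩

lemma clause_syms_mem {C : Clause L} {l : Lit L (Fin C.nvars)} (hl : l ∈ C.lits)
    {s : L.Term (Fin C.nvars)} (hs : s ∈ l.terms) {p : Sym L} (hp : p ∈ termSyms s) :
    p ∈ C.syms :=
  Set.mem_iUnion₂.2 ⟨l, hl, Set.mem_iUnion₂.2 ⟨s, hs, hp⟩⟩

/-- Occurring variable of a clause. -/
def OccVar (C : Clause L) (x : Fin C.nvars) : Prop :=
  ∃ l ∈ C.lits, ∃ s ∈ Lit.terms l, x ∈ varOccs s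

/-- Decomposition of the symbols of an instance. -/
lemma syms_instantiate {C : Clause L} {σ : Fin C.nvars → GTerm L} {p : Sym L}
    (hp : p ∈ GClause.syms (C.instantiate σ)) :
    p ∈ C.syms ∨ ∃ x, OccVar C x ∧ p ∈ termSyms (σ x) := by
  simp only [GClause.syms, Set.mem_iUnion₂] at hp
  obtain ⟨l', hl', hpl⟩ := hp
  simp only [Clause.instantiate, List.mem_map] at hl'
  obtain ⟨l, hl, rfl⟩ := hl'
  simp only [Lit.syms, Set.mem_iUnion₂] at hpl
  obtain ⟨s', hs', hps⟩ := hpl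
  obtain ⟨s, hs, rfl⟩ := Lit.terms_subst_surj hs'
  rcases termSyms_subst σ s hps with h | h
  · exact Or.inl (clause_syms_mem hl hs h)
  · simp only [Set.mem_iUnion₂] at h
    obtain ⟨x, hx, hpx⟩ := h
    exact Or.inr ⟨x, ⟨l, hl, s, hs, hx⟩, hpx⟩

/-- Every occurring variable's value in an admissible instance lies below an extension-rooted
term of `Tt` whose root symbol is a symbol of `C`. -/
lemma sigma_val_controlled {F : Set (Sym L)} {Tt : Set (GTerm L)} {C : Clause L}
    (hflat : C.Flat F) (hvars : C.VarsBelowExt F) {σ : Fin C.nvars → GTerm L}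
    (hinst : ∀ t ∈ GClause.gterms (C.instantiate σ), rootIn F t → t ∈ Tt)
    {x : Fin C.nvars} (hx : OccVar C x) :
    ∃ w ∈ Tt, σ x ∈ subterms w ∧
      ∃ (m : ℕ) (g : L.Functions m), (∃ ts, w = Term.func g ts) ∧
        (⟨m, g⟩ : Sym L) ∈ F ∧ (⟨m, g⟩ : Sym L) ∈ C.syms := by
  obtain ⟨u, hu, hxu⟩ := hvars x hx
  obtain ⟨hroot, l₂, hl₂, s₂, hs₂, husub⟩ := hu
  cases u with
  | var a => exact absurd hroot (by simp [rootIn])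
  | func g tsu =>
      have hgF : (⟨_, g⟩ : Sym L) ∈ F := hroot
      have hflatu : flatTerm F (Term.func g tsu) :=
        flatTerm_of_subterm (hflat l₂ hl₂ s₂ hs₂) husub
      obtain ⟨i, hxi⟩ := mem_varOccs_func.1 hxu
      obtain ⟨a, ha⟩ := hflatu.1 hgF i
      rw [ha] at hxi
      have hxa : x = a := by simpa [varOccs] using hxi
      subst hxa
      refine ⟨(Term.func g tsu).subst σ, ?_, ?_, _, g, ⟨fun j => (tsu j).subst σ, rfl⟩, hgF,
        clause_syms_mem hl₂ hs₂ (termSyms_mono husub (root_mem_termSyms g tsu))⟩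
      · refine hinst _ ?_ ?_
        · have h1 : (Term.func g tsu).subst σ ∈ subterms (s₂.subst σ) := subterms_subst husub
          have h2 : s₂.subst σ ∈ (l₂.subst σ).terms := Lit.terms_subst hs₂
          have h3 : Lit.subst σ l₂ ∈ C.instantiate σ := List.mem_map_of_mem hl₂
          exact Set.mem_iUnion₂.2 ⟨_, h3, Set.mem_iUnion₂.2 ⟨_, h2, h1⟩⟩
        · simpa [Term.subst, rootIn] using hgF
      · have : σ x ∈ subterms ((tsu i).subst σ) := by
          rw [ha]; exact mem_subterms_self _
        simp only [Term.subst, subterms]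
        exact Or.inr (Set.mem_iUnion.2 ⟨i, this⟩)

/-- Instances of a clause depend only on the values of the substitution at occurring
variables. -/
lemma instantiate_congr {C : Clause L} {σ σ' : Fin C.nvars → GTerm L}
    (h : ∀ x, OccVar C x → σ x = σ' x) : C.instantiate σ = C.instantiate σ' := by
  unfold Clause.instantiate
  refine List.map_congr_left ?_
  intro l hl
  exact litSubst_congr (fun s hs x hx => h x ⟨l, hl, s, hs, hx⟩)

end Aux2

section Aux3

variable {L : FirstOrder.Language.{0, 0}}

lemma lit_terms_finite {α : Type} (l : Lit L α) : l.terms.Finite := by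
  cases l with
  | eq t u => exact (Set.finite_singleton u).insert t
  | neq t u => exact (Set.finite_singleton u).insert t
  | rel R ts => exact Set.finite_range ts
  | nrel R ts => exact Set.finite_range ts

lemma gclause_gterms_finite (C : GClause L) : (GClause.gterms C).Finite :=
  Set.Finite.biUnion (List.finite_toSet C)
    (fun l _ => Set.Finite.biUnion (lit_terms_finite l) (fun t _ => subterms_finite t))

lemma empty_elim_injective {α : Type} : Function.Injective (Empty.elim : Empty → α) :=
  fun {a} => a.elim

lemma estKG_finite {F : Set (Sym L)} {K : Set (Clause L)} {G : Set (GClause L)}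
    (hK : K.Finite) (hG : G.Finite) : (estKG F K G).Finite := by
  have h1 : estKG F K G ⊆
      (⋃ C ∈ K, {t : GTerm L | ∃ l ∈ C.lits, ∃ s ∈ Lit.terms l, GTerm.cast t ∈ subterms s}) ∪
        ⋃ C ∈ G, GClause.gterms C := by
    rintro t ⟨-, h | h⟩
    · obtain ⟨C, hC, hrest⟩ := h
      exact Or.inl (Set.mem_iUnion₂.2 ⟨C, hC, hrest⟩)
    · obtain ⟨C, hC, ht⟩ := h
      exact Or.inr (Set.mem_iUnion₂.2 ⟨C, hC, ht⟩)
  refine Set.Finite.subset (Set.Finite.union ?_ ?_) h1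
  · refine Set.Finite.biUnion hK (fun C _ => ?_)
    have heq : {t : GTerm L | ∃ l ∈ C.lits, ∃ s ∈ Lit.terms l, GTerm.cast t ∈ subterms s} =
        (GTerm.cast (α := Fin C.nvars)) ⁻¹' (⋃ l ∈ C.lits, ⋃ s ∈ Lit.terms l, subterms s) := by
      ext t
      simp [Set.mem_iUnion₂, Set.mem_preimage]
    rw [heq]
    refine Set.Finite.preimage ?_ ?_
    · exact Set.injOn_of_injective (relabel_injective empty_elim_injective)
    · exact Set.Finite.biUnion (List.finite_toSet C.lits)
        (fun l _ => Set.Finite.biUnion (lit_terms_finite l) (fun s _ => subterms_finite s))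
  · exact Set.Finite.biUnion hG (fun C _ => gclause_gterms_finite C)

lemma instancesIn_finite {F : Set (Sym L)} {K : Set (Clause L)} {Tt : Set (GTerm L)}
    (hK : K.Finite) (hTt : Tt.Finite)
    (hflat : ∀ C ∈ K, C.Flat F) (hvars : ∀ C ∈ K, C.VarsBelowExt F) :
    (instancesIn F K Tt).Finite := by
  classical
  set V : Set (GTerm L) := ⋃ t ∈ Tt, subterms t with hV
  have hVfin : V.Finite := Set.Finite.biUnion hTt (fun t _ => subterms_finite t)
  have hsub : instancesIn F K Tt ⊆ ⋃ C ∈ K,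
      {D | ∃ σ : Fin C.nvars → GTerm L, D = C.instantiate σ ∧ ∀ x, OccVar C x → σ x ∈ V} := by
    rintro D ⟨C, hC, σ, rfl, hcond⟩
    refine Set.mem_iUnion₂.2 ⟨C, hC, σ, rfl, ?_⟩
    intro x hx
    obtain ⟨w, hw, hsw, -⟩ := sigma_val_controlled (hflat C hC) (hvars C hC) hcond hx
    exact Set.mem_iUnion₂.2 ⟨w, hw, hsw⟩
  refine Set.Finite.subset (Set.Finite.biUnion hK (fun C _ => ?_)) hsub
  by_cases hVne : V.Nonempty
  · obtain ⟨v₀, hv₀⟩ := hVne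
    haveI : Finite ↥V := hVfin
    have hsub2 : {D | ∃ σ : Fin C.nvars → GTerm L, D = C.instantiate σ ∧
          ∀ x, OccVar C x → σ x ∈ V} ⊆
        Set.range (fun f : Fin C.nvars → ↥V => C.instantiate (fun i => (f i : GTerm L))) := by
      rintro D ⟨σ, rfl, hσ⟩
      refine ⟨fun i => if h : σ i ∈ V then ⟨σ i, h⟩ else ⟨v₀, hv₀⟩, ?_⟩
      refine instantiate_congr (fun x hx => ?_)
      simp only [dif_pos (hσ x hx)]
    exact Set.Finite.subset (Set.finite_range _) hsub2
  · apply Set.Subsingleton.finite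
    rintro D1 ⟨σ1, rfl, h1⟩ D2 ⟨σ2, rfl, h2⟩
    refine instantiate_congr (fun x hx => absurd (h1 x hx) (fun hc => hVne ⟨_, hc⟩))

end Aux3

section Aux4

variable {L : FirstOrder.Language.{0, 0}}

/-- The canonical map `Empty ⊕ Fin 0 → Empty`. -/
def e0 : Empty ⊕ Fin 0 → Empty := Sum.elim (fun e => e) Fin.elim0

lemma comp_e0 {M : Type} (v : Empty → M) (xs : Fin 0 → M) :
    ((fun e : Empty => e.elim) ∘ e0 : Empty ⊕ Fin 0 → M) = Sum.elim v xs := by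
  funext x
  rcases x with e | i
  · exact e.elim
  · exact i.elim0

lemma gclauseHolds_append {M : Type} {S : L.Structure M} {C D : GClause L} :
    GClauseHolds M S (C ++ D) ↔ GClauseHolds M S C ∨ GClauseHolds M S D := by
  simp [GClauseHolds, List.mem_append, or_and_right, exists_or]

lemma gclause_syms_append {C D : GClause L} :
    GClause.syms (C ++ D) ⊆ GClause.syms C ∪ GClause.syms D := by
  intro p hp
  simp only [GClause.syms, Set.mem_iUnion₂, List.mem_append] at hp
  obtain ⟨l, hl | hl, hpl⟩ := hp
  · exact Or.inl (Set.mem_iUnion₂.2 ⟨l, hl, hpl⟩)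
  · exact Or.inr (Set.mem_iUnion₂.2 ⟨l, hl, hpl⟩)

/-- CNFs of a quantifier-free formula and of its negation. -/
def cnf {n : ℕ} (ρ : Empty ⊕ Fin n → Empty) :
    L.BoundedFormula Empty n → List (GClause L) × List (GClause L)
  | .falsum => ([([] : GClause L)], [])
  | .equal t u =>
      ([ [Lit.eq (t.relabel ρ) (u.relabel ρ)] ], [ [Lit.neq (t.relabel ρ) (u.relabel ρ)] ])
  | .rel R ts =>
      ([ [Lit.rel R (fun i => (ts i).relabel ρ)] ], [ [Lit.nrel R (fun i => (ts i).relabel ρ)] ])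
  | .imp f g =>
      ((cnf ρ f).2.flatMap (fun C => (cnf ρ g).1.map (fun D => C ++ D)),
        (cnf ρ f).1 ++ (cnf ρ g).2)
  | .all _ => ([], [])

set_option maxHeartbeats 1000000 in
lemma cnf_correct {M : Type} {S : L.Structure M} {φ : L.BoundedFormula Empty 0}
    (h : φ.IsQF) (v : Empty → M) (xs : Fin 0 → M) :
    ((∀ C ∈ (cnf e0 φ).1, GClauseHolds M S C) ↔ @BoundedFormula.Realize L M S _ _ φ v xs) ∧
    ((∀ C ∈ (cnf e0 φ).2, GClauseHolds M S C) ↔ ¬ @BoundedFormula.Realize L M S _ _ φ v xs) := by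
  have hterm : ∀ t : L.Term (Empty ⊕ Fin 0),
      TVal M S (fun e : Empty => e.elim) (t.relabel e0) =
        @FirstOrder.Language.Term.realize L M S _ (Sum.elim v xs) t := by
    intro t
    rw [TVal_eq, Term.realize_relabel, comp_e0 v xs]
  induction h with
  | falsum =>
      constructor
      · simp [GClauseHolds, cnf, BoundedFormula.Realize]
      · simp [cnf, BoundedFormula.Realize]
  | @of_isAtomic ψ hψ =>
      cases hψ with
      | equal t u =>
          constructor
          · simp [cnf, GClauseHolds, Lit.Realize, hterm, BoundedFormula.Realize, Term.bdEqual]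
          · simp [cnf, GClauseHolds, Lit.Realize, hterm, BoundedFormula.Realize, Term.bdEqual]
      | rel R ts =>
          constructor
          · simp [cnf, GClauseHolds, Lit.Realize, hterm, BoundedFormula.Realize, RelM_eq,
              Relations.boundedFormula]
          · simp [cnf, GClauseHolds, Lit.Realize, hterm, BoundedFormula.Realize, RelM_eq,
              Relations.boundedFormula]
  | @imp f g hf hg ihf ihg =>
      have hlhs : (∀ C ∈ (cnf e0 (f.imp g)).1, GClauseHolds M S C) ↔
          ((∀ C ∈ (cnf e0 f).2, GClauseHolds M S C) ∨
            (∀ C ∈ (cnf e0 g).1, GClauseHolds M S C)) := by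
        constructor
        · intro h
          by_cases hC : ∀ C ∈ (cnf e0 f).2, GClauseHolds M S C
          · exact Or.inl hC
          · push_neg at hC
            obtain ⟨C0, hC0, hC0f⟩ := hC
            refine Or.inr (fun D hD => ?_)
            have := h (C0 ++ D) (by
              simp only [cnf, List.mem_flatMap, List.mem_map]
              exact ⟨C0, hC0, D, hD, rfl⟩)
            rcases gclauseHolds_append.1 this with h1 | h1
            · exact absurd h1 hC0f
            · exact h1
        · intro h E hE
          simp only [cnf, List.mem_flatMap, List.mem_map] at hE
          obtain ⟨C, hC, D, hD, rfl⟩ := hE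
          rcases h with h | h
          · exact gclauseHolds_append.2 (Or.inl (h C hC))
          · exact gclauseHolds_append.2 (Or.inr (h D hD))
      constructor
      · rw [hlhs, ihf.2, ihg.1]
        simp only [BoundedFormula.realize_imp]
        tauto
      · have : (∀ C ∈ (cnf e0 (f.imp g)).2, GClauseHolds M S C) ↔
            ((∀ C ∈ (cnf e0 f).1, GClauseHolds M S C) ∧
              (∀ C ∈ (cnf e0 g).2, GClauseHolds M S C)) := by
          simp only [cnf, List.mem_append]
          constructor
          · intro h
            exact ⟨fun C hC => h C (Or.inl hC), fun C hC => h C (Or.inr hC)⟩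
          · rintro ⟨h1, h2⟩ C (hC | hC)
            · exact h1 C hC
            · exact h2 C hC
        rw [this, ihf.1, ihg.2]
        simp only [BoundedFormula.realize_imp]
        tauto

set_option maxHeartbeats 1000000 in
lemma cnf_syms {n : ℕ} (ρ : Empty ⊕ Fin n → Empty) (φ : L.BoundedFormula Empty n) :
    (∀ C ∈ (cnf ρ φ).1, GClause.syms C ⊆ bfSyms φ) ∧
    (∀ C ∈ (cnf ρ φ).2, GClause.syms C ⊆ bfSyms φ) := by
  induction φ with
  | falsum => simp [cnf, GClause.syms, Lit.syms]
  | equal t u =>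
      constructor
      · intro C hC
        simp only [cnf, List.mem_singleton] at hC
        subst hC
        intro p hp
        simp only [GClause.syms, Set.mem_iUnion₂, List.mem_singleton] at hp
        obtain ⟨l, rfl, hpl⟩ := hp
        simp only [Lit.syms, Lit.terms, Set.mem_iUnion₂, Set.mem_insert_iff,
          Set.mem_singleton_iff] at hpl
        obtain ⟨s, rfl | rfl, hps⟩ := hpl
        · rw [bfSyms]; exact Or.inl (by rwa [termSyms_relabel] at hps)
        · rw [bfSyms]; exact Or.inr (by rwa [termSyms_relabel] at hps)
      · intro C hC
        simp only [cnf, List.mem_singleton] at hC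
        subst hC
        intro p hp
        simp only [GClause.syms, Set.mem_iUnion₂, List.mem_singleton] at hp
        obtain ⟨l, rfl, hpl⟩ := hp
        simp only [Lit.syms, Lit.terms, Set.mem_iUnion₂, Set.mem_insert_iff,
          Set.mem_singleton_iff] at hpl
        obtain ⟨s, rfl | rfl, hps⟩ := hpl
        · rw [bfSyms]; exact Or.inl (by rwa [termSyms_relabel] at hps)
        · rw [bfSyms]; exact Or.inr (by rwa [termSyms_relabel] at hps)
  | rel R ts =>
      constructor
      · intro C hC
        simp only [cnf, List.mem_singleton] at hC
        subst hC
        intro p hp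
        simp only [GClause.syms, Set.mem_iUnion₂, List.mem_singleton] at hp
        obtain ⟨l, rfl, hpl⟩ := hp
        simp only [Lit.syms, Lit.terms, Set.mem_iUnion₂] at hpl
        obtain ⟨s, ⟨i, rfl⟩, hps⟩ := hpl
        rw [bfSyms]
        exact Set.mem_iUnion.2 ⟨i, by rwa [termSyms_relabel] at hps⟩
      · intro C hC
        simp only [cnf, List.mem_singleton] at hC
        subst hC
        intro p hp
        simp only [GClause.syms, Set.mem_iUnion₂, List.mem_singleton] at hp
        obtain ⟨l, rfl, hpl⟩ := hp
        simp only [Lit.syms, Lit.terms, Set.mem_iUnion₂] at hpl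
        obtain ⟨s, ⟨i, rfl⟩, hps⟩ := hpl
        rw [bfSyms]
        exact Set.mem_iUnion.2 ⟨i, by rwa [termSyms_relabel] at hps⟩
  | imp f g ihf ihg =>
      constructor
      · intro C hC
        simp only [cnf, List.mem_flatMap, List.mem_map] at hC
        obtain ⟨C1, hC1, C2, hC2, rfl⟩ := hC
        refine (gclause_syms_append).trans ?_
        rw [bfSyms]
        exact Set.union_subset_union ((ihf ρ).2 C1 hC1) ((ihg ρ).1 C2 hC2)
      · intro C hC
        simp only [cnf, List.mem_append] at hC
        rw [bfSyms]
        rcases hC with hC | hC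
        · exact ((ihf ρ).1 C hC).trans Set.subset_union_left
        · exact ((ihg ρ).2 C hC).trans Set.subset_union_right
  | all f ih => simp [cnf]

end Aux4

section Aux5

variable {L : FirstOrder.Language.{0, 0}}

/-- The sentence expressing a ground literal. -/
def litSent : Lit L Empty → L.Sentence
  | .eq t u => Term.bdEqual (t.relabel Sum.inl) (u.relabel Sum.inl)
  | .neq t u => (Term.bdEqual (t.relabel Sum.inl) (u.relabel Sum.inl)).not
  | .rel R ts => R.boundedFormula (fun i => (ts i).relabel Sum.inl)
  | .nrel R ts => (R.boundedFormula (fun i => (ts i).relabel Sum.inl)).not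

lemma realize_litSent (M : Type) (S : L.Structure M) (l : Lit L Empty) :
    RealizeSent M S (litSent l) ↔ Lit.Realize M S (fun e : Empty => e.elim) l := by
  have hterm : ∀ (t : L.Term Empty) (xs : Fin 0 → M),
      @FirstOrder.Language.Term.realize L M S _
        (Sum.elim (fun e : Empty => e.elim) xs) (t.relabel Sum.inl) =
      TVal M S (fun e : Empty => e.elim) t := by
    intro t xs
    rw [Term.realize_relabel, TVal_eq, Sum.elim_comp_inl]
  cases l with
  | eq t u =>
      simp only [litSent, RealizeSent, RealizeF_eq, Formula.Realize, Term.bdEqual,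
        Lit.Realize, BoundedFormula.realize_bdEqual, BoundedFormula.Realize, hterm]
  | neq t u =>
      simp only [litSent, RealizeSent, RealizeF_eq, Formula.Realize, Term.bdEqual,
        Lit.Realize, BoundedFormula.realize_not, BoundedFormula.realize_bdEqual,
        BoundedFormula.Realize, hterm]
  | rel R ts =>
      simp only [litSent, RealizeSent, RealizeF_eq, Formula.Realize,
        Lit.Realize, BoundedFormula.realize_rel, BoundedFormula.Realize, hterm, RelM_eq,
        Relations.boundedFormula]
  | nrel R ts =>
      simp only [litSent, RealizeSent, RealizeF_eq, Formula.Realize,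
        Lit.Realize, BoundedFormula.realize_not, BoundedFormula.realize_rel,
        BoundedFormula.Realize, hterm, RelM_eq, Relations.boundedFormula]

lemma litSent_isQF (l : Lit L Empty) : (litSent l).IsQF := by
  cases l with
  | eq t u => exact (BoundedFormula.IsAtomic.equal _ _).isQF
  | neq t u => exact (BoundedFormula.IsAtomic.equal _ _).isQF.not
  | rel R ts => exact (BoundedFormula.IsAtomic.rel _ _).isQF
  | nrel R ts => exact (BoundedFormula.IsAtomic.rel _ _).isQF.not

lemma litSent_syms (l : Lit L Empty) : sentSyms (litSent l) ⊆ Lit.syms l := by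
  cases l with
  | eq t u =>
      intro p hp
      rcases hp with hp | hp
      · rw [termSyms_relabel] at hp
        exact Set.mem_iUnion₂.2 ⟨t, by simp [Lit.terms], hp⟩
      · rw [termSyms_relabel] at hp
        exact Set.mem_iUnion₂.2 ⟨u, by simp [Lit.terms], hp⟩
  | neq t u =>
      intro p hp
      rcases hp with (hp | hp) | hp
      · rw [termSyms_relabel] at hp
        exact Set.mem_iUnion₂.2 ⟨t, by simp [Lit.terms], hp⟩
      · rw [termSyms_relabel] at hp
        exact Set.mem_iUnion₂.2 ⟨u, by simp [Lit.terms], hp⟩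
      · exact absurd hp (by simp [bfSyms])
  | rel R ts =>
      intro p hp
      obtain ⟨i, hpi⟩ := Set.mem_iUnion.1 hp
      rw [termSyms_relabel] at hpi
      exact Set.mem_iUnion₂.2 ⟨ts i, ⟨i, rfl⟩, hpi⟩
  | nrel R ts =>
      intro p hp
      rcases hp with hp | hp
      · obtain ⟨i, hpi⟩ := Set.mem_iUnion.1 hp
        rw [termSyms_relabel] at hpi
        exact Set.mem_iUnion₂.2 ⟨ts i, ⟨i, rfl⟩, hpi⟩
      · exact absurd hp (by simp [bfSyms])

/-- The sentence expressing a ground clause. -/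
def gclauseSent (C : GClause L) : L.Sentence := (C.map litSent).foldr (· ⊔ ·) ⊥

lemma realize_gclauseSent (M : Type) (S : L.Structure M) (C : GClause L) :
    RealizeSent M S (gclauseSent C) ↔ GClauseHolds M S C := by
  induction C with
  | nil =>
      simp only [gclauseSent, List.map_nil, List.foldr_nil, GClauseHolds, List.not_mem_nil,
        RealizeSent, RealizeF_eq, Formula.Realize]
      simp [BoundedFormula.realize_bot]
  | cons l C ih =>
      simp only [gclauseSent, List.map_cons, List.foldr_cons]
      have : RealizeSent M S (litSent l ⊔ (C.map litSent).foldr (· ⊔ ·) ⊥) ↔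
          RealizeSent M S (litSent l) ∨ RealizeSent M S (gclauseSent C) := by
        simp only [RealizeSent, RealizeF_eq, Formula.Realize, gclauseSent,
          BoundedFormula.realize_sup]
      rw [this, realize_litSent, ih]
      simp only [GClauseHolds, List.mem_cons]
      constructor
      · rintro (h | ⟨l', hl', h⟩)
        · exact ⟨l, Or.inl rfl, h⟩
        · exact ⟨l', Or.inr hl', h⟩
      · rintro ⟨l', rfl | hl', h⟩
        · exact Or.inl h
        · exact Or.inr ⟨l', hl', h⟩

lemma gclauseSent_isQF (C : GClause L) : (gclauseSent C).IsQF := by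
  induction C with
  | nil => exact BoundedFormula.isQF_bot
  | cons l C ih => exact (litSent_isQF l).sup ih

lemma bfSyms_sup {α : Type} {n : ℕ} (φ ψ : L.BoundedFormula α n) :
    bfSyms (φ ⊔ ψ) = (bfSyms φ ∪ bfSyms (⊥ : L.BoundedFormula α n)) ∪ bfSyms ψ := rfl

lemma bfSyms_inf {α : Type} {n : ℕ} (φ ψ : L.BoundedFormula α n) :
    bfSyms (φ ⊓ ψ) = (bfSyms φ ∪ (bfSyms ψ ∪ bfSyms (⊥ : L.BoundedFormula α n))) ∪ bfSyms (⊥ : L.BoundedFormula α n) := rfl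

lemma bfSyms_bot {α : Type} {n : ℕ} : bfSyms (⊥ : L.BoundedFormula α n) = ∅ := rfl

lemma gclauseSent_syms (C : GClause L) : sentSyms (gclauseSent C) ⊆ GClause.syms C := by
  induction C with
  | nil =>
      intro p hp
      exact absurd hp (by rw [gclauseSent]; simp [bfSyms_bot, List.map_nil, List.foldr_nil,
        sentSyms, bfSyms])
  | cons l C ih =>
      intro p hp
      have hp' : p ∈ sentSyms (litSent l ⊔ gclauseSent C) := hp
      rw [sentSyms, bfSyms_sup, bfSyms_bot, Set.union_empty] at hp'
      have hmem : ∀ q ∈ GClause.syms C, q ∈ GClause.syms (l :: C) := by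
        intro q hq
        simp only [GClause.syms, Set.mem_iUnion₂, List.mem_cons] at hq ⊢
        obtain ⟨l', hl', h⟩ := hq
        exact ⟨l', Or.inr hl', h⟩
      rcases hp' with hp' | hp'
      · have := litSent_syms l hp'
        simp only [GClause.syms, Set.mem_iUnion₂, List.mem_cons]
        exact ⟨l, Or.inl rfl, this⟩
      · exact hmem p (ih hp')

/-- Conjunction of a list of sentences. -/
def conjSent (lst : List L.Sentence) : L.Sentence := lst.foldr (· ⊓ ·) ⊤

lemma realize_conjSent (M : Type) (S : L.Structure M) (lst : List L.Sentence) :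
    RealizeSent M S (conjSent lst) ↔ ∀ φ ∈ lst, RealizeSent M S φ := by
  induction lst with
  | nil =>
      simp only [conjSent, List.foldr_nil, List.not_mem_nil, RealizeSent, RealizeF_eq,
        Formula.Realize]
      simp [BoundedFormula.realize_top]
  | cons φ lst ih =>
      simp only [conjSent, List.foldr_cons]
      have : RealizeSent M S (φ ⊓ lst.foldr (· ⊓ ·) ⊤) ↔
          RealizeSent M S φ ∧ RealizeSent M S (conjSent lst) := by
        simp only [RealizeSent, RealizeF_eq, Formula.Realize, conjSent,
          BoundedFormula.realize_inf]
      rw [this, ih]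
      simp only [List.mem_cons]
      constructor
      · rintro ⟨h1, h2⟩ ψ (rfl | hψ)
        · exact h1
        · exact h2 ψ hψ
      · intro h
        exact ⟨h φ (Or.inl rfl), fun ψ hψ => h ψ (Or.inr hψ)⟩

lemma conjSent_isQF (lst : List L.Sentence) (h : ∀ φ ∈ lst, φ.IsQF) :
    (conjSent lst).IsQF := by
  induction lst with
  | nil => exact BoundedFormula.IsQF.top
  | cons φ lst ih =>
      exact (h φ List.mem_cons_self).inf (ih (fun ψ hψ => h ψ (List.mem_cons_of_mem _ hψ)))

lemma conjSent_syms (lst : List L.Sentence) :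
    sentSyms (conjSent lst) ⊆ ⋃ φ ∈ lst, sentSyms φ := by
  induction lst with
  | nil =>
      intro p hp
      exact absurd hp (by simp [conjSent, sentSyms, bfSyms, Top.top, BoundedFormula.not])
  | cons φ lst ih =>
      intro p hp
      have hp' : p ∈ sentSyms (φ ⊓ conjSent lst) := hp
      rw [sentSyms, bfSyms_inf, bfSyms_bot] at hp'
      simp only [Set.union_empty] at hp'
      simp only [Set.mem_iUnion₂, List.mem_cons]
      rcases hp' with hp' | hp'
      · exact ⟨φ, Or.inl rfl, hp'⟩
      · obtain ⟨ψ, hψ, h⟩ := Set.mem_iUnion₂.1 (ih hp')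
        exact ⟨ψ, Or.inr hψ, h⟩

lemma realizeSent_eq (M : Type) (S : L.Structure M) (φ : L.Sentence) :
    RealizeSent M S φ =
      @FirstOrder.Language.BoundedFormula.Realize L M S Empty 0 φ (fun e => e.elim) default :=
  rfl

lemma realizeSent_imp (M : Type) (S : L.Structure M) (f g : L.Sentence) :
    RealizeSent M S (f.imp g) ↔ (RealizeSent M S f → RealizeSent M S g) := by
  rw [realizeSent_eq, realizeSent_eq, realizeSent_eq, BoundedFormula.realize_imp]

lemma termSyms_cast {α : Type} (t : GTerm L) :
    termSyms (GTerm.cast (α := α) t) = termSyms t :=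
  termSyms_relabel _ _

lemma sentSyms_imp (f g : L.Sentence) : sentSyms (f.imp g) = sentSyms f ∪ sentSyms g := rfl

end Aux5

/-- Proposition `prop-leave-ax-forgotten-out`.  Under the hypotheses of
the symbol-elimination theorem (Statement 2), let `Γ` be the `T`-general uniform interpolant
of `G` w.r.t. `Sigs ∪ C̄s` (with `Cs ⊆ C̄s`) obtained by Algorithm 1.  If `ψ` is a ground
`Π_s^{Cs}`-formula which is a `(T0 ∪ Ks ∪ UIF_{Sig1 ∪ Sigi})`-uniform interpolant of `Γ`
w.r.t. `Cs`, then `ψ` is a `T`-general uniform interpolant of `G` w.r.t. `Sigs ∪ Cs`. -/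
theorem uniform_interpolant_of_gamma_is_general_uniform_interpolant
    (L : FirstOrder.Language.{0, 0})
    (F0 Sigs Sig1 Sigi CC : Set (Sym L))
    (hd01 : Disjoint F0 (Sigs ∪ Sig1 ∪ Sigi)) (hd02 : Disjoint F0 CC)
    (hd12 : Disjoint (Sigs ∪ Sig1 ∪ Sigi) CC)
    (hdss1 : Disjoint Sigs Sig1) (hdssi : Disjoint Sigs Sigi) (hds1i : Disjoint Sig1 Sigi)
    (hcover : F0 ∪ (Sigs ∪ Sig1 ∪ Sigi) ∪ CC = Set.univ)
    (hCC0 : ∀ p ∈ CC, p.1 = 0)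
    (T0 : L.Theory) (hT0 : theorySyms T0 ⊆ F0) (hqe : HasQE T0 F0)
    (Ks K1 Ki : Set (Clause L)) (hKfin : (Ks ∪ K1 ∪ Ki).Finite)
    (hKssyms : ClausesSyms Ks ⊆ F0 ∪ Sigs)
    (hK1syms : ClausesSyms K1 ⊆ F0 ∪ Sig1)
    (hKisyms : ClausesSyms Ki ⊆ F0 ∪ Sigi)
    (hKflat : ∀ C ∈ Ks ∪ K1 ∪ Ki, C.Flat (Sigs ∪ Sig1 ∪ Sigi))
    (hKlin : ∀ C ∈ Ks ∪ K1 ∪ Ki, C.Linear (Sigs ∪ Sig1 ∪ Sigi))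
    (hKvars : ∀ C ∈ Ks ∪ K1 ∪ Ki, C.VarsBelowExt (Sigs ∪ Sig1 ∪ Sigi))
    (hloc : LocalExt (Sigs ∪ Sig1 ∪ Sigi) T0 (Ks ∪ K1 ∪ Ki))
    (G : Set (GClause L)) (hGfin : G.Finite)
    (hGsyms : GSyms G ⊆ F0 ∪ Sigs ∪ Sig1 ∪ CC)
    (hGflat : ∀ C ∈ G, GClause.Flat (Sigs ∪ Sig1 ∪ Sigi) C)
    (hGlin : ∀ C ∈ G, GClause.Linear (Sigs ∪ Sig1 ∪ Sigi) C)
    (Cs : Set (Sym L)) (hCs : Cs ⊆ CC ∩ GSyms G)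
    -- `Γ` is the general uniform interpolant of `G` w.r.t. `Sigs ∪ C̄s` obtained by Algorithm 1:
    (Γ : L.Sentence)
    (hΓalg : AlgOneOutput (Sigs ∪ Sig1 ∪ Sigi) T0 (Ks ∪ K1) G
               (estKG (Sigs ∪ Sig1 ∪ Sigi) (Ks ∪ K1 ∪ Ki) G)
               (F0 ∪ Sigs ∪ (Cs ∪ (argConstsOf Sigs (GTerms G) ∩ CC))) Γ)
    (hΓgui : IsGUIg T0 (Ks ∪ K1 ∪ Ki) G
               (F0 ∪ Sigs ∪ (Cs ∪ (argConstsOf Sigs (GTerms G) ∩ CC))) Γ)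
    -- `ψ` is a ground `Π_s^{Cs}`-formula :
    (ψ : L.Sentence) (hψsyms : sentSyms ψ ⊆ F0 ∪ Sigs ∪ Cs)
    -- ... which is a `(T0 ∪ Ks ∪ UIF_{Sig1 ∪ Sigi})`-uniform interpolant of `Γ` w.r.t. `Cs` :
    (hψui : IsUI T0 Ks CC Cs Γ ψ) :
    IsGUIg T0 (Ks ∪ K1 ∪ Ki) G (F0 ∪ Sigs ∪ Cs) ψ := by
  classical
  obtain ⟨hΓqf, hΓsyms, hΓent, hΓmax⟩ := hΓgui
  obtain ⟨hψqf, hψcc, hψent, hψmax⟩ := hψui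
  -- the constants appearing as arguments of `Sigs`-symbols in `G` occur in `G`
  have hargG : argConstsOf Sigs (GTerms G) ⊆ GSyms G := by
    rintro p ⟨c, rfl, t, htG, n, f, ts, rfl, hfS, i, hi⟩
    simp only [GTerms, Set.mem_iUnion₂] at htG
    obtain ⟨C, hC, ht⟩ := htG
    have h1 : (⟨0, c⟩ : Sym L) ∈ termSyms (Term.func f ts) := by
      rw [termSyms]
      refine Set.mem_insert_iff.2 (Or.inr (Set.mem_iUnion.2 ⟨i, ?_⟩))
      rw [hi, constT, termSyms]
      exact Set.mem_insert _ _
    exact Set.mem_iUnion₂.2 ⟨C, hC, gterm_syms ht h1⟩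
  have hKeepCC : ∀ p ∈ sentSyms Γ, p ∈ CC → p ∈ Cs ∨ p ∈ argConstsOf Sigs (GTerms G) := by
    intro p hp hpCC
    rcases hΓsyms hp with (h | h) | h
    · exact absurd hpCC (Set.disjoint_left.1 hd02 h)
    · exact absurd hpCC (Set.disjoint_left.1 hd12 (Or.inl (Or.inl h)))
    · rcases h with h | h
      · exact Or.inl h
      · exact Or.inr h.1
  refine ⟨hψqf, hψsyms, ?_, ?_⟩
  · -- `G ⊨_T ψ`
    intro M S hne hT0M hKM hGM
    have hΓM : RealizeSent M S Γ := hΓent M S hne hT0M hKM hGM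
    exact hψent M S hne hT0M (fun C hC => hKM C (Or.inl (Or.inl hC))) hΓM
  · -- maximality
    intro θ hθqf hθsyms hθent
    -- symbols shared by `θ` and `Γ` among the constants are in `Cs`
    have hθΓcc : ∀ p, p ∈ sentSyms θ → p ∈ sentSyms Γ → p ∈ CC → p ∈ Cs := by
      intro p hθp hΓp hpCC
      rcases hKeepCC p hΓp hpCC with h | h
      · exact h
      · rcases hθsyms ⟨hθp, hargG h⟩ with (h0 | h0) | h0
        · exact absurd hpCC (Set.disjoint_left.1 hd02 h0)
        · exact absurd hpCC (Set.disjoint_left.1 hd12 (Or.inl (Or.inl h0)))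
        · exact h0
    -- `Γ ⊨_T θ`
    have hΓθ : EntailsS T0 (Ks ∪ K1 ∪ Ki) Γ θ := by
      refine hΓmax θ hθqf (fun p hp => ?_) hθent
      rcases hθsyms hp with (h | h) | h
      · exact Or.inl (Or.inl h)
      · exact Or.inl (Or.inr h)
      · exact Or.inr (Or.inl h)
    -- the CNF of `Γ ∧ ¬θ`
    set Gp : List (GClause L) := (cnf e0 Γ).1 ++ (cnf e0 θ).2 with hGpdef
    set G' : Set (GClause L) := {C | C ∈ Gp} with hG'def
    have hG'fin : G'.Finite := Gp.finite_toSet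
    have hG'models : ∀ (M : Type) (S : L.Structure M),
        ModelsG M S G' ↔ (RealizeSent M S Γ ∧ ¬ RealizeSent M S θ) := by
      intro M S
      have h1 := @cnf_correct L M S Γ hΓqf (fun e => e.elim) default
      have h2 := @cnf_correct L M S θ hθqf (fun e => e.elim) default
      rw [realizeSent_eq M S Γ, realizeSent_eq M S θ, ← h1.1, ← h2.2]
      constructor
      · intro h
        exact ⟨fun C hC => h C (List.mem_append.2 (Or.inl hC)),
          fun C hC => h C (List.mem_append.2 (Or.inr hC))⟩
      · rintro ⟨ha, hb⟩ C hC
        rcases List.mem_append.1 hC with hC | hC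
        · exact ha C hC
        · exact hb C hC
    -- `T0 ∪ K ∪ G'` is unsatisfiable
    have hunsat1 : ¬ ∃ (M : Type) (_ : Nonempty M) (S : L.Structure M),
        ModelsT M S T0 ∧ ModelsK M S ∅ ∧ ModelsK M S (Ks ∪ K1 ∪ Ki) ∧ ModelsG M S G' := by
      rintro ⟨M, hne, S, hT0M, -, hKM, hGM⟩
      obtain ⟨hΓM, hθM⟩ := (hG'models M S).1 hGM
      exact hθM (hΓθ M S hne hT0M hKM hΓM)
    have hunsat2 := (hloc G' hG'fin).1 hunsat1
    -- the relevant instances of the axioms `K1 ∪ Ki`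
    set Tt : Set (GTerm L) := estKG (Sigs ∪ Sig1 ∪ Sigi) (Ks ∪ K1 ∪ Ki) G' with hTtdef
    set N : Set (GClause L) := instancesIn (Sigs ∪ Sig1 ∪ Sigi) (K1 ∪ Ki) Tt with hNdef
    have h1iK : K1 ∪ Ki ⊆ Ks ∪ K1 ∪ Ki := by
      rintro C (hC | hC)
      · exact Or.inl (Or.inr hC)
      · exact Or.inr hC
    have hNfin : N.Finite :=
      instancesIn_finite (hKfin.subset h1iK) (estKG_finite hKfin hG'fin)
        (fun C hC => hKflat C (h1iK hC)) (fun C hC => hKvars C (h1iK hC))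
    set Nl : List L.Sentence := hNfin.toFinset.toList.map gclauseSent with hNldef
    set θhat : L.Sentence := (conjSent Nl).imp θ with hθhatdef
    -- `θhat` is quantifier-free
    have hθhatqf : θhat.IsQF := by
      refine (conjSent_isQF Nl ?_).imp hθqf
      intro φ hφ
      obtain ⟨D, -, rfl⟩ := List.mem_map.1 hφ
      exact gclauseSent_isQF D
    -- symbol condition for `θhat`
    have hNsyms : ∀ D ∈ N, ∀ p, p ∈ GClause.syms D → p ∈ sentSyms Γ → p ∈ CC → p ∈ Cs := by
      rintro D ⟨C, hC, σ, rfl, hcond⟩ p hp hpΓ hpCC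
      have hCsyms : C.syms ⊆ F0 ∪ Sig1 ∪ Sigi := by
        rcases hC with h | h
        · intro q hq
          rcases hK1syms (Set.mem_iUnion₂.2 ⟨C, h, hq⟩) with h0 | h0
          · exact Or.inl (Or.inl h0)
          · exact Or.inl (Or.inr h0)
        · intro q hq
          rcases hKisyms (Set.mem_iUnion₂.2 ⟨C, h, hq⟩) with h0 | h0
          · exact Or.inl (Or.inl h0)
          · exact Or.inr h0
      rcases syms_instantiate hp with h | ⟨x, hx, hpx⟩
      · rcases hCsyms h with (h0 | h0) | h0
        · exact absurd hpCC (Set.disjoint_left.1 hd02 h0)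
        · exact absurd hpCC (Set.disjoint_left.1 hd12 (Or.inl (Or.inr h0)))
        · exact absurd hpCC (Set.disjoint_left.1 hd12 (Or.inr h0))
      · obtain ⟨w, hw, hsw, m, g, ⟨ts, rfl⟩, hgF, hgC⟩ :=
          sigma_val_controlled (hKflat C (h1iK hC)) (hKvars C (h1iK hC)) hcond hx
        have hpw : p ∈ termSyms (Term.func g ts) := termSyms_mono hsw hpx
        obtain ⟨hroot, hwsrc⟩ := hw
        rcases hwsrc with hinK | hinG'
        · -- the extension term comes from `K` itself : no constants at all
          obtain ⟨C₀, hC₀, l₀, hl₀, s₀, hs₀, hsub⟩ := hinK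
          have hmono : termSyms (GTerm.cast (α := Fin C₀.nvars) (Term.func g ts)) ⊆
              termSyms s₀ := termSyms_mono hsub
          rw [termSyms_cast] at hmono
          have hp0 : p ∈ Clause.syms C₀ := clause_syms_mem hl₀ hs₀ (hmono hpw)
          rcases hC₀ with (h0 | h0) | h0
          · rcases hKssyms (Set.mem_iUnion₂.2 ⟨C₀, h0, hp0⟩) with h1 | h1
            · exact absurd hpCC (Set.disjoint_left.1 hd02 h1)
            · exact absurd hpCC (Set.disjoint_left.1 hd12 (Or.inl (Or.inl h1)))
          · rcases hK1syms (Set.mem_iUnion₂.2 ⟨C₀, h0, hp0⟩) with h1 | h1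
            · exact absurd hpCC (Set.disjoint_left.1 hd02 h1)
            · exact absurd hpCC (Set.disjoint_left.1 hd12 (Or.inl (Or.inr h1)))
          · rcases hKisyms (Set.mem_iUnion₂.2 ⟨C₀, h0, hp0⟩) with h1 | h1
            · exact absurd hpCC (Set.disjoint_left.1 hd02 h1)
            · exact absurd hpCC (Set.disjoint_left.1 hd12 (Or.inr h1))
        · -- the extension term occurs in the CNF of `Γ ∧ ¬θ`
          obtain ⟨C₁, hC₁, hwG⟩ := hinG'
          have hwsyms : termSyms (Term.func g ts) ⊆ GClause.syms C₁ := gterm_syms hwG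
          have hgSig : (⟨m, g⟩ : Sym L) ∈ Sig1 ∪ Sigi := by
            rcases hCsyms hgC with (h0 | h0) | h0
            · exact absurd hgF (Set.disjoint_left.1 hd01 h0)
            · exact Or.inl h0
            · exact Or.inr h0
          rcases List.mem_append.1 hC₁ with h1 | h1
          · -- impossible : `Γ` contains no `Sig1 ∪ Sigi` symbols
            exfalso
            have hgΓ : (⟨m, g⟩ : Sym L) ∈ sentSyms Γ :=
              (cnf_syms e0 Γ).1 C₁ h1 (hwsyms (root_mem_termSyms g ts))
            rcases hΓsyms hgΓ with (h2 | h2) | h2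
            · exact Set.disjoint_left.1 hd01 h2
                (by rcases hgSig with h3 | h3
                    · exact Or.inl (Or.inr h3)
                    · exact Or.inr h3)
            · rcases hgSig with h3 | h3
              · exact Set.disjoint_left.1 hdss1 h2 h3
              · exact Set.disjoint_left.1 hdssi h2 h3
            · have hgCC : (⟨m, g⟩ : Sym L) ∈ CC := by
                rcases h2 with h3 | h3
                · exact (hCs h3).1
                · exact h3.2
              refine Set.disjoint_left.1 hd12 ?_ hgCC
              rcases hgSig with h3 | h3
              · exact Or.inl (Or.inr h3)
              · exact Or.inr h3
          · -- the term comes from `θ`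
            have hpθ : p ∈ sentSyms θ := (cnf_syms e0 θ).2 C₁ h1 (hwsyms hpw)
            exact hθΓcc p hpθ hpΓ hpCC
    have hθhatsyms : sentSyms θhat ∩ sentSyms Γ ∩ CC ⊆ Cs := by
      rintro p ⟨⟨hp1, hp2⟩, hp3⟩
      rw [hθhatdef, sentSyms_imp] at hp1
      rcases hp1 with hp1 | hp1
      · obtain ⟨φ, hφ, hpφ⟩ := Set.mem_iUnion₂.1 (conjSent_syms Nl hp1)
        obtain ⟨D, hD, rfl⟩ := List.mem_map.1 hφ
        have hDN : D ∈ N := hNfin.mem_toFinset.1 (Finset.mem_toList.1 hD)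
        exact hNsyms D hDN p (gclauseSent_syms D hpφ) hp2 hp3
      · exact hθΓcc p hp1 hp2 hp3
    -- `Γ ⊨_{T0 ∪ Ks} θhat`
    have hent3 : EntailsS T0 Ks Γ θhat := by
      intro M S hne hT0M hKsM hΓM
      rw [hθhatdef, realizeSent_imp]
      intro hconj
      by_contra hθM
      refine hunsat2 ⟨M, hne, S, hT0M, fun C hC => absurd hC (Set.notMem_empty C), ?_⟩
      intro C hC
      rcases hC with hC | hC
      · obtain ⟨C₀, hC₀, σ, rfl, hcond⟩ := hC
        rcases hC₀ with (h0 | h0) | h0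
        · exact holds_instance M S (hKsM C₀ h0) σ
        · have hDN : C₀.instantiate σ ∈ N := ⟨C₀, Or.inl h0, σ, rfl, hcond⟩
          have hmem : gclauseSent (C₀.instantiate σ) ∈ Nl :=
            List.mem_map_of_mem (Finset.mem_toList.2 (hNfin.mem_toFinset.2 hDN))
          exact (realize_gclauseSent M S _).1 ((realize_conjSent M S Nl).1 hconj _ hmem)
        · have hDN : C₀.instantiate σ ∈ N := ⟨C₀, Or.inr h0, σ, rfl, hcond⟩
          have hmem : gclauseSent (C₀.instantiate σ) ∈ Nl :=
            List.mem_map_of_mem (Finset.mem_toList.2 (hNfin.mem_toFinset.2 hDN))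
          exact (realize_gclauseSent M S _).1 ((realize_conjSent M S Nl).1 hconj _ hmem)
      · exact (hG'models M S).2 ⟨hΓM, hθM⟩ C hC
    -- `ψ ⊨_{T0 ∪ Ks} θhat`
    have hψθhat : EntailsS T0 Ks ψ θhat := hψmax θhat hθhatqf hθhatsyms hent3
    -- conclude
    intro M S hne hT0M hKM hψM
    have hKsM : ModelsK M S Ks := fun C hC => hKM C (Or.inl (Or.inl hC))
    have hθhatM := hψθhat M S hne hT0M hKsM hψM
    rw [hθhatdef, realizeSent_imp] at hθhatM
    refine hθhatM ?_
    rw [realize_conjSent]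
    intro φ hφ
    obtain ⟨D, hD, rfl⟩ := List.mem_map.1 hφ
    have hDN : D ∈ N := hNfin.mem_toFinset.1 (Finset.mem_toList.1 hD)
    obtain ⟨C, hC, σ, rfl, -⟩ := hDN
    rw [realize_gclauseSent]
    exact holds_instance M S (hKM C (h1iK hC)) σ

end PaperSE
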